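/- The generic is not a ground-model real: for every t : ℝ, letting Ḡ_t be the name whose pairs are ⟨q̂, Set.univ⟩ for each rational q with (↑q : ℝ) < t, there is no nonempty open J ⊆ ℝ with J ⊩ G = Ḡ_t. -/

import Mathlib

/-- Names over ℝ: a name is a family of pairs of a name and an open set of reals. -/
inductive Name : Type 1
  | mk (ι : Type) (elem : ι → Name) (cond : ι → Set ℝ) (hopen : ∀ i, IsOpen (cond i)) : Name

namespace Name

/-- The index type of the family of pairs of a name. -/
def idx : Name → Type
  | mk ι _ _ _ => ι

/-- The name component of the `i`-th pair. -/
def elem : (σ : Name) → σ.idx → Name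
  | mk _ e _ _ => e

/-- The open-set component of the `i`-th pair. -/
def cond : (σ : Name) → σ.idx → Set ℝ
  | mk _ _ c _ => c

theorem cond_isOpen : ∀ (σ : Name) (i : σ.idx), IsOpen (σ.cond i)
  | mk _ _ _ h => h

/-- Rank of a name, used for the recursive definition of forcing. -/
noncomputable def rank : Name → Ordinal.{0}
  | mk _ e _ _ => Ordinal.lsub fun i => rank (e i)

theorem rank_elem_lt : ∀ (σ : Name) (i : σ.idx), (σ.elem i).rank < σ.rank
  | mk ι e c h, i => by
    simpa [rank, elem] using Ordinal.lt_lsub (fun i => rank (e i)) i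

theorem lex_max_min_lt_left {a a' : Ordinal.{0}} (h : a' < a) (b : Ordinal.{0}) :
    Prod.Lex (· < ·) (· < ·) (max a' b, min a' b) (max a b, min a b) := by
  rcases lt_or_ge (max a' b) (max a b) with h1 | h1
  · exact Prod.Lex.left _ _ h1
  · have e : max a' b = max a b := le_antisymm (max_le_max h.le le_rfl) h1
    rw [e]
    apply Prod.Lex.right
    rcases le_total a b with hab | hab
    · rw [min_eq_left hab, min_eq_left (h.le.trans hab)]; exact h
    · have : max a b = a := max_eq_left hab
      rw [this] at e
      rcases le_total a' b with h2 | h2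
      · rw [max_eq_right h2] at e
        rw [min_eq_left h2, min_eq_right hab, e]; exact h
      · rw [max_eq_left h2] at e; exact absurd e h.ne

theorem lex_max_min_lt_right {b b' : Ordinal.{0}} (h : b' < b) (a : Ordinal.{0}) :
    Prod.Lex (· < ·) (· < ·) (max a b', min a b') (max a b, min a b) := by
  simpa only [max_comm a, min_comm a] using lex_max_min_lt_left h a

mutual
  /-- `feq σ τ J` means `J ⊩ σ = τ`. -/
  def feq (σ τ : Name) (J : Set ℝ) : Prop :=
    (∀ i : σ.idx, fmem (σ.elem i) τ (J ∩ σ.cond i)) ∧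
    (∀ j : τ.idx, fmem (τ.elem j) σ (J ∩ τ.cond j))
  termination_by (max σ.rank τ.rank, min σ.rank τ.rank)
  decreasing_by
    · exact lex_max_min_lt_left (rank_elem_lt σ i) τ.rank
    · simpa only [max_comm σ.rank, min_comm σ.rank] using
        lex_max_min_lt_right (rank_elem_lt τ j) σ.rank

  /-- `fmem σ τ J` means `J ⊩ σ ∈ τ`. -/
  def fmem (σ τ : Name) (J : Set ℝ) : Prop :=
    ∀ r ∈ J, ∃ (j : τ.idx) (J' : Set ℝ), IsOpen J' ∧ r ∈ J' ∩ τ.cond j ∧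
      feq σ (τ.elem j) (J' ∩ τ.cond j)
  termination_by (max σ.rank τ.rank, min σ.rank τ.rank)
  decreasing_by
    exact lex_max_min_lt_right (rank_elem_lt τ j) σ.rank
end

end Name

namespace Name

/-- Canonical name of a hereditary set (by ∈-recursion): pairs ⟨ŷ, univ⟩ for members y. -/
def ofPSet : PSet → Name
  | PSet.mk α A => Name.mk α (fun a => ofPSet (A a)) (fun _ => Set.univ) (fun _ => isOpen_univ)

/-- Canonical name of a ZF set. -/
noncomputable def canonical (x : ZFSet) : Name := ofPSet x.out

end Name

/-- The finite von Neumann ordinals as ZF sets. -/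
def natZF : ℕ → ZFSet
  | 0 => ∅
  | n+1 => insert (natZF n) (natZF n)

/-- Integers coded as ZF sets. -/
def intZF : ℤ → ZFSet := fun z => ZFSet.pair (natZF z.toNat) (natZF (-z).toNat)

/-- Rationals coded as ZF sets (as a pair of numerator and denominator). -/
def ratZF (q : ℚ) : ZFSet := ZFSet.pair (intZF q.num) (natZF q.den)

/-- The canonical name q̂ of a rational number q. -/
noncomputable def ratName (q : ℚ) : Name := Name.canonical (ratZF q)

/-- The generic name G: its pairs are ⟨q̂, J⟩ for q rational and J a nonempty
open interval all of whose members exceed q. -/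
noncomputable def generic : Name :=
  Name.mk {p : ℚ × ℝ × ℝ // (Set.Ioo p.2.1 p.2.2).Nonempty ∧
      ∀ x ∈ Set.Ioo p.2.1 p.2.2, (p.1 : ℝ) < x}
    (fun p => ratName p.1.1)
    (fun p => Set.Ioo p.1.2.1 p.1.2.2)
    (fun p => isOpen_Ioo)

/-- The ground-model name Ḡ_t of the Dedekind cut of a real t: its pairs are
⟨q̂, univ⟩ for rationals q below t. -/
noncomputable def groundReal (t : ℝ) : Name :=
  Name.mk {q : ℚ // (q : ℝ) < t} (fun q => ratName q.1)
    (fun _ => Set.univ) (fun _ => isOpen_univ)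

section Aux

open Name

theorem canonFeq : ∀ (x : PSet), ∀ (y : PSet) (S : Set ℝ), S.Nonempty →
    (Name.feq (Name.ofPSet x) (Name.ofPSet y) S → PSet.Equiv x y) ∧
    (Name.feq (Name.ofPSet y) (Name.ofPSet x) S → PSet.Equiv y x) := by
  intro x
  induction x with
  | mk α A ih =>
    intro y S hS
    obtain ⟨β, B⟩ := y
    obtain ⟨r, hr⟩ := hS
    constructor
    · intro h
      rw [Name.feq] at h
      simp only [Name.ofPSet, Name.idx, Name.elem, Name.cond] at h
      refine ⟨fun a => ?_, fun b => ?_⟩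
      · have h1 := h.1 a
        rw [Name.fmem] at h1
        obtain ⟨b, J', _, hrm, hfe⟩ := h1 r ⟨hr, trivial⟩
        simp only [Name.ofPSet, Name.idx, Name.elem, Name.cond] at hrm hfe
        exact ⟨b, (ih a (B b) _ ⟨r, hrm⟩).1 hfe⟩
      · have h2 := h.2 b
        rw [Name.fmem] at h2
        obtain ⟨a, J', _, hrm, hfe⟩ := h2 r ⟨hr, trivial⟩
        simp only [Name.ofPSet, Name.idx, Name.elem, Name.cond] at hrm hfe
        exact ⟨a, ((ih a (B b) _ ⟨r, hrm⟩).2 hfe).symm⟩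
    · intro h
      rw [Name.feq] at h
      simp only [Name.ofPSet, Name.idx, Name.elem, Name.cond] at h
      refine ⟨fun b => ?_, fun a => ?_⟩
      · have h1 := h.1 b
        rw [Name.fmem] at h1
        obtain ⟨a, J', _, hrm, hfe⟩ := h1 r ⟨hr, trivial⟩
        simp only [Name.ofPSet, Name.idx, Name.elem, Name.cond] at hrm hfe
        exact ⟨a, (ih a (B b) _ ⟨r, hrm⟩).2 hfe⟩
      · have h2 := h.2 a
        rw [Name.fmem] at h2
        obtain ⟨b, J', _, hrm, hfe⟩ := h2 r ⟨hr, trivial⟩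
        simp only [Name.ofPSet, Name.idx, Name.elem, Name.cond] at hrm hfe
        exact ⟨b, ((ih a (B b) _ ⟨r, hrm⟩).1 hfe).symm⟩

theorem natZF_mem {m n : ℕ} (h : m < n) : natZF m ∈ natZF n := by
  induction n with
  | zero => omega
  | succ n ihn =>
    rcases Nat.lt_succ_iff_lt_or_eq.1 h with h' | h'
    · exact ZFSet.mem_insert_iff.2 (Or.inr (ihn h'))
    · exact ZFSet.mem_insert_iff.2 (Or.inl (by rw [h']))

theorem natZF_inj : Function.Injective natZF := by
  intro m n h
  rcases lt_trichotomy m n with h' | h' | h'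
  · exact absurd (h ▸ natZF_mem h') (ZFSet.mem_irrefl _)
  · exact h'
  · exact absurd (h ▸ natZF_mem h') (ZFSet.mem_irrefl _)

theorem ratZF_inj : Function.Injective ratZF := by
  intro q q' h
  obtain ⟨h1, h2⟩ := ZFSet.pair_injective h
  obtain ⟨h3, h4⟩ := ZFSet.pair_injective h1
  have hnum : q.num = q'.num := by
    have e3 := natZF_inj h3
    have e4 := natZF_inj h4
    omega
  have hden : q.den = q'.den := natZF_inj h2
  exact Rat.ext hnum hden

theorem ratName_inj {q q' : ℚ} {S : Set ℝ} (hS : S.Nonempty)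
    (h : Name.feq (ratName q) (ratName q') S) : q = q' := by
  have he := (canonFeq (ratZF q).out (ratZF q').out S hS).1 h
  have h2 : ratZF q = ratZF q' := by
    rw [← ZFSet.mk_out (ratZF q), ← ZFSet.mk_out (ratZF q')]
    exact ZFSet.sound he
  exact ratZF_inj h2

end Aux

theorem generic_not_ground (t : ℝ) :
    ¬ ∃ J : Set ℝ, IsOpen J ∧ J.Nonempty ∧ Name.feq generic (groundReal t) J := by
  rintro ⟨J, hJo, ⟨r, hrJ⟩, hfeq⟩
  rw [Name.feq] at hfeq
  simp only [generic, groundReal, Name.idx, Name.elem, Name.cond] at hfeq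
  obtain ⟨ε, hε, hball⟩ := Metric.isOpen_iff.1 hJo r hrJ
  rw [Real.ball_eq_Ioo] at hball
  obtain ⟨q, hq1, hq2⟩ := exists_rat_btwn (lt_add_of_pos_right r hε)
  by_cases hqt : (q : ℝ) < t
  · have h := hfeq.2 ⟨q, hqt⟩
    rw [Name.fmem] at h
    simp only [generic, Name.idx, Name.elem, Name.cond] at h
    obtain ⟨p, J', hJ'o, hrm, hfe⟩ := h r ⟨hrJ, trivial⟩
    have hq : q = p.1.1 := ratName_inj ⟨r, hrm⟩ hfe
    have hlt := p.2.2 r hrm.2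
    rw [← hq] at hlt
    linarith
  · push_neg at hqt
    have hqre : (q : ℝ) < r + ε := hq2
    have hne : (Set.Ioo (q : ℝ) (r + ε)).Nonempty :=
      ⟨((q : ℝ) + (r + ε)) / 2, by constructor <;> linarith⟩
    have h := hfeq.1 ⟨(q, (q : ℝ), r + ε), hne, fun x hx => hx.1⟩
    rw [Name.fmem] at h
    simp only [groundReal, Name.idx, Name.elem, Name.cond] at h
    set s : ℝ := ((q : ℝ) + (r + ε)) / 2 with hs
    have hsIoo : s ∈ Set.Ioo (q : ℝ) (r + ε) := ⟨by rw [hs]; linarith, by rw [hs]; linarith⟩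
    have hsJ : s ∈ J := hball ⟨by rw [hs]; linarith, hsIoo.2⟩
    obtain ⟨j, J', hJ'o, hsm, hfe⟩ := h s ⟨hsJ, hsIoo⟩
    have hq : q = j.1 := ratName_inj ⟨s, hsm⟩ hfe
    have := j.2
    rw [← hq] at this
    linarith
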